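/- Let Q be a unital quantale, M a Q-module generated by a subset X ⊆ M. Then M is a projective object in the category of Q-modules if and only if there exists k ∈ Q^(X×X) with k⋆k = k (where (k⋆k)(x,y) = ⋁_{z∈X} k(x,z)·k(z,y)) such that M is isomorphic to the submodule of Q^X generated by the rows {k(x,·) : x ∈ X}. -/

import Mathlib

universe u v

/-- A (left) module over a unital quantale `Q`: a complete lattice with a scalar
multiplication satisfying `(a*b)•v = a•(b•v)`, distributivity over arbitrary joins
in both arguments, and `1•v = v`. -/
class QuantaleModule (Q : Type u) (M : Type v) [Monoid Q] [CompleteLattice Q]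
    [CompleteLattice M] extends SMul Q M where
  mul_smul : ∀ (a b : Q) (v : M), (a * b) • v = a • b • v
  smul_sSup : ∀ (a : Q) (S : Set M), a • sSup S = ⨆ v ∈ S, a • v
  sSup_smul : ∀ (S : Set Q) (v : M), sSup S • v = ⨆ a ∈ S, a • v
  one_smul : ∀ v : M, (1 : Q) • v = v

/-- A homomorphism of `Q`-modules: preserves arbitrary joins and the scalar action. -/
def IsHom (Q : Type u) {M N : Type*} [Monoid Q] [CompleteLattice Q]
    [CompleteLattice M] [CompleteLattice N] [QuantaleModule Q M] [QuantaleModule Q N]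
    (f : M → N) : Prop :=
  (∀ S : Set M, f (sSup S) = ⨆ v ∈ S, f v) ∧ (∀ (a : Q) (v : M), f (a • v) = a • f v)

/-- The free `Q`-module `Q^X`, with pointwise joins and scalar multiplication. -/
instance piQuantaleModule (Q : Type u) (X : Type v) [Monoid Q] [CompleteLattice Q]
    [IsQuantale Q] : QuantaleModule Q (X → Q) where
  smul a f := fun x => a * f x
  mul_smul a b f := funext fun x => mul_assoc a b (f x)
  one_smul f := funext fun x => one_mul (f x)
  smul_sSup a S := by
    funext x
    show a * sSup S x = (⨆ v ∈ S, (fun y => a * v y)) x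
    simp [sSup_apply, iSup_apply, Quantale.mul_iSup_distrib, iSup_subtype']
  sSup_smul S f := by
    funext x
    show sSup S * f x = (⨆ a ∈ S, (fun y => a * f y)) x
    simp [sSup_mul_distrib, iSup_apply]

/-- Projectivity of a `Q`-module: the lifting property against surjective
`Q`-module homomorphisms. -/
def ProjectiveQM (Q : Type u) (M : Type u) [Monoid Q] [CompleteLattice Q] [IsQuantale Q]
    [CompleteLattice M] [QuantaleModule Q M] : Prop :=
  ∀ (N P : Type u) [CompleteLattice N] [CompleteLattice P]
    [QuantaleModule Q N] [QuantaleModule Q P] (pi : N → P) (g : M → P),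
    IsHom Q pi → Function.Surjective pi → IsHom Q g →
    ∃ h : M → N, IsHom Q h ∧ pi ∘ h = g

/-- The `Q`-module transform `h_k : Q^X → Q^X` with kernel `k`. -/
def hk {Q : Type u} [Monoid Q] [CompleteLattice Q] {X : Type v} (k : X → X → Q)
    (f : X → Q) : X → Q := fun y => ⨆ x, f x * k x y

/-- The matrix product `(k ⋆ l)(x,y) = ⨆ z, k x z * l z y`. -/
def matStar {Q : Type u} [Monoid Q] [CompleteLattice Q] {X : Type v} (k l : X → X → Q) :
    X → X → Q := fun x y => ⨆ z, k x z * l z y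

section Aux

open Classical

variable {Q : Type u} [Monoid Q] [CompleteLattice Q] [IsQuantale Q]

lemma qmul_iSup {ι : Sort*} (a : Q) (f : ι → Q) : a * (⨆ i, f i) = ⨆ i, a * f i := by
  rw [iSup, mul_sSup_distrib, iSup_range]

lemma qiSup_mul {ι : Sort*} (f : ι → Q) (a : Q) : (⨆ i, f i) * a = ⨆ i, f i * a := by
  rw [iSup, sSup_mul_distrib, iSup_range]

lemma qmul_bot (a : Q) : a * (⊥ : Q) = ⊥ := by
  have := IsQuantale.mul_sSup_distrib a (∅ : Set Q)
  simpa using this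

section Mod
variable {M : Type*} [CompleteLattice M] [QuantaleModule Q M]

lemma qsmul_iSup {ι : Sort*} (a : Q) (v : ι → M) : a • (⨆ i, v i) = ⨆ i, a • v i := by
  rw [iSup, QuantaleModule.smul_sSup, iSup_range]

lemma qiSup_smul {ι : Sort*} (c : ι → Q) (v : M) : (⨆ i, c i) • v = ⨆ i, c i • v := by
  rw [iSup, QuantaleModule.sSup_smul, iSup_range]

variable {N : Type*} [CompleteLattice N] [QuantaleModule Q N]

lemma IsHom.map_iSup {f : M → N} (hf : IsHom Q f) {ι : Sort*} (v : ι → M) :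
    f (⨆ i, v i) = ⨆ i, f (v i) := by
  rw [iSup, hf.1, iSup_range]

lemma IsHom.comp {P : Type*} [CompleteLattice P] [QuantaleModule Q P]
    {f : M → N} {g : N → P} (hg : IsHom Q g) (hf : IsHom Q f) : IsHom Q (g ∘ f) := by
  constructor
  · intro S
    show g (f (sSup S)) = _
    rw [hf.1, iSup_subtype', hg.map_iSup, iSup_subtype']
    rfl
  · intro a v
    show g (f (a • v)) = _
    rw [hf.2, hg.2]
    rfl

lemma isHom_id : IsHom Q (id : M → M) := by
  refine ⟨fun S => ?_, fun a v => rfl⟩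
  simp [sSup_eq_iSup]

end Mod

variable {X : Type u}

lemma pi_smul_apply (a : Q) (f : X → Q) (x : X) : (a • f) x = a * f x := rfl

/-- The standard basis of the free module. -/
noncomputable def qdelta (x : X) : X → Q := fun y => if y = x then 1 else ⊥

lemma qdelta_expand (f : X → Q) : f = ⨆ x, f x • qdelta x := by
  funext y
  rw [iSup_apply]
  apply le_antisymm
  · refine le_trans ?_ (le_iSup _ y)
    simp [pi_smul_apply, qdelta]
  · refine iSup_le fun x => ?_
    rw [pi_smul_apply, qdelta]
    by_cases h : y = x
    · subst h; simp
    · simp [h, qmul_bot]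

section Sum
variable {M : Type*} [CompleteLattice M] [QuantaleModule Q M]

/-- `f ↦ ⨆ x, f x • n x` is a `Q`-module homomorphism `Q^X → M`. -/
lemma smulSum_isHom (n : X → M) : IsHom Q (fun f : X → Q => ⨆ x, f x • n x) := by
  constructor
  · intro S
    rw [iSup_subtype']
    have : ∀ x, sSup S x = ⨆ f : S, (f : X → Q) x := by
      intro x; rw [sSup_apply]
    calc (⨆ x, sSup S x • n x) = ⨆ x, ⨆ f : S, (f : X → Q) x • n x := by
          refine iSup_congr fun x => ?_
          rw [this x, qiSup_smul]
      _ = ⨆ f : S, ⨆ x, (f : X → Q) x • n x := iSup_comm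
  · intro a f
    calc (⨆ x, (a • f) x • n x) = ⨆ x, a • (f x • n x) := by
          refine iSup_congr fun x => ?_
          rw [pi_smul_apply, QuantaleModule.mul_smul]
      _ = a • ⨆ x, f x • n x := (qsmul_iSup a _).symm

lemma hom_smulSum {N : Type*} [CompleteLattice N] [QuantaleModule Q N]
    {g : M → N} (hg : IsHom Q g) (c : X → Q) (n : X → M) :
    g (⨆ x, c x • n x) = ⨆ x, c x • g (n x) := by
  rw [hg.map_iSup]
  exact iSup_congr fun x => hg.2 _ _

end Sum

/-- `hk k` is a `Q`-module homomorphism. -/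
lemma hk_isHom (k : X → X → Q) : IsHom Q (hk k) := by
  have : hk k = fun f : X → Q => ⨆ x, f x • k x := by
    funext f y
    rw [hk, iSup_apply]
    exact iSup_congr fun x => rfl
  rw [this]
  exact smulSum_isHom k

/-- If `k ⋆ k = k` then `hk k` is idempotent. -/
lemma hk_idem {k : X → X → Q} (hkk : matStar k k = k) (f : X → Q) :
    hk k (hk k f) = hk k f := by
  funext y
  calc hk k (hk k f) y = ⨆ x, (⨆ z, f z * k z x) * k x y := rfl
    _ = ⨆ x, ⨆ z, f z * k z x * k x y := iSup_congr fun x => qiSup_mul _ _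
    _ = ⨆ z, ⨆ x, f z * (k z x * k x y) := by
        rw [iSup_comm]
        exact iSup_congr fun z => iSup_congr fun x => mul_assoc _ _ _
    _ = ⨆ z, f z * matStar k k z y := iSup_congr fun z => (qmul_iSup _ _).symm
    _ = hk k f y := by rw [hkk]; rfl

/-- The free module `Q^X` is projective. -/
lemma free_lift {N P : Type u} [CompleteLattice N] [CompleteLattice P]
    [QuantaleModule Q N] [QuantaleModule Q P] (pi : N → P) (g : (X → Q) → P)
    (hpi : IsHom Q pi) (hsurj : Function.Surjective pi) (hg : IsHom Q g) :
    ∃ H : (X → Q) → N, IsHom Q H ∧ pi ∘ H = g := by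
  choose n hn using fun x : X => hsurj (g (qdelta x))
  refine ⟨fun f => ⨆ x, f x • n x, smulSum_isHom n, funext fun f => ?_⟩
  show pi (⨆ x, f x • n x) = g f
  rw [hom_smulSum hpi]
  calc (⨆ x, f x • pi (n x)) = ⨆ x, f x • g (qdelta x) := by
        exact iSup_congr fun x => by rw [hn]
    _ = g (⨆ x, f x • qdelta x) := (hom_smulSum hg f qdelta).symm
    _ = g f := by rw [← qdelta_expand]

end Aux

/-- **Theorem (characterization of projective `Q`-modules).** Let `M` be a `Q`-module
generated by `X ⊆ M`. Then `M` is projective iff there is a multiplicatively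
idempotent `k ∈ Q^(X×X)` (`k ⋆ k = k`) such that `M` is isomorphic to the submodule
of `Q^X` generated by the rows `{k(x,·)}` — i.e. there is an injective `Q`-module
homomorphism `φ : M → Q^X` whose range is the range of `h_k` (the set of all joins
`⨆ x, c x • k(x,·)`). -/
theorem projective_iff_idempotent_kernel (Q : Type u) (M : Type u)
    [Monoid Q] [CompleteLattice Q] [IsQuantale Q] [CompleteLattice M] [QuantaleModule Q M]
    (X : Set M) (hgen : ∀ v : M, ∃ c : X → Q, v = ⨆ x : X, c x • (x : M)) :
    ProjectiveQM Q M ↔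
      ∃ k : X → X → Q, matStar k k = k ∧
        ∃ φ : M → (X → Q), IsHom Q φ ∧ Function.Injective φ ∧
          Set.range φ = Set.range (hk k) := by
  constructor
  · -- Projective ⇒ idempotent kernel
    intro hproj
    have heps_hom : IsHom Q (fun f : X → Q => ⨆ x : X, f x • (x : M)) :=
      smulSum_isHom (fun x : X => (x : M))
    have heps_surj : Function.Surjective (fun f : X → Q => ⨆ x : X, f x • (x : M)) := by
      intro v; obtain ⟨c, hc⟩ := hgen v; exact ⟨c, hc.symm⟩
    obtain ⟨s, hs_hom, hs_sec⟩ :=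
      hproj (X → Q) M (fun f : X → Q => ⨆ x : X, f x • (x : M)) id heps_hom heps_surj isHom_id
    have hsec : ∀ v : M, (⨆ x : X, (s v) x • (x : M)) = v := by
      intro v
      have := congrFun hs_sec v
      simpa using this
    have hsinj : Function.Injective s := fun a b h => by
      rw [← hsec a, h, hsec b]
    set k : X → X → Q := fun x y => s (x : M) y with hk_def
    have key : ∀ c : X → Q, s (⨆ x : X, c x • (x : M)) = hk k c := by
      intro c
      funext y
      rw [hom_smulSum hs_hom, iSup_apply]
      exact iSup_congr fun x => rfl
    refine ⟨k, ?_, s, hs_hom, hsinj, ?_⟩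
    · funext x y
      calc matStar k k x y = hk k (s (x : M)) y := rfl
        _ = s (⨆ z : X, s (x : M) z • (z : M)) y := by rw [key (s (x : M))]
        _ = s (x : M) y := by rw [hsec (x : M)]
    · ext f
      simp only [Set.mem_range]
      constructor
      · rintro ⟨v, rfl⟩
        obtain ⟨c, hc⟩ := hgen v
        refine ⟨c, ?_⟩
        rw [hc]
        exact (key c).symm
      · rintro ⟨c, rfl⟩
        exact ⟨⨆ x : X, c x • (x : M), key c⟩
  · -- Idempotent kernel ⇒ projective
    rintro ⟨k, hkk, φ, hφ, hφinj, hrange⟩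
    intro N P _ _ _ _ pi g hpi hsurj hg
    have hmem : ∀ f : X → Q, ∃ v, φ v = hk k f := by
      intro f
      have : hk k f ∈ Set.range φ := by rw [hrange]; exact ⟨f, rfl⟩
      exact this
    choose ρ hρ using hmem
    have hρ_hom : IsHom Q ρ := by
      constructor
      · intro S
        apply hφinj
        rw [hρ, (hk_isHom k).1 S, iSup_subtype', iSup_subtype', hφ.map_iSup]
        exact iSup_congr fun f => (hρ _).symm
      · intro a f
        apply hφinj
        rw [hρ, hφ.2, hρ, (hk_isHom k).2]
    have hretr : ∀ v, ρ (φ v) = v := by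
      intro v
      apply hφinj
      rw [hρ]
      obtain ⟨f, hf⟩ : φ v ∈ Set.range (hk k) := hrange ▸ Set.mem_range_self v
      rw [← hf, hk_idem hkk]
    obtain ⟨H, hH_hom, hH⟩ := free_lift pi (g ∘ ρ) hpi hsurj (hg.comp hρ_hom)
    refine ⟨H ∘ φ, hH_hom.comp hφ, ?_⟩
    funext v
    have h1 : pi (H (φ v)) = (g ∘ ρ) (φ v) := congrFun hH (φ v)
    show pi (H (φ v)) = g v
    rw [h1]
    show g (ρ (φ v)) = g v
    rw [hretr]
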